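/- Let S be a countable set, L a finite label set, and (S, L, τ, ℓ) a finitely branching labelled Markov chain. For a policy T assigning to each pair (s,t) with ℓ(s)=ℓ(t) and s not bisimilar to t a coupling T(s,t) ∈ Ω(τ(s),τ(t)), define Θ^T(e)(s,t) = 0 if s ∼ t, 1 if ℓ(s) ≠ ℓ(t), and ∑_{u,v} T(s,t)(u,v) e(u,v) otherwise. Then the probabilistic bisimilarity distance d satisfies d ⊑ μ.Θ^T (pointwise), i.e., the least fixed point of Θ^T is an upper bound on d, for every policy T. -/

import Mathlib

open scoped ENNReal Classical

/-- `ω` is a coupling of `μ` and `ν`. -/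
def IsCoupling {S : Type*} (μ ν : S → ℝ≥0∞) (ω : S × S → ℝ≥0∞) : Prop :=
  (∀ s, (∑' t, ω (s, t)) = μ s) ∧ (∀ t, (∑' s, ω (s, t)) = ν t)

/-- `r` is a probabilistic bisimulation on the LMC with transitions `τ` and labels `ℓ`. -/
def IsBisimulation {S L : Type*} (τ : S → S → ℝ≥0∞) (ℓ : S → L) (r : S → S → Prop) : Prop :=
  Equivalence r ∧ ∀ s t, r s t → ℓ s = ℓ t ∧
    ∀ u, (∑' v : {v // r u v}, τ s v) = (∑' v : {v // r u v}, τ t v)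

/-- Probabilistic bisimilarity: the largest probabilistic bisimulation. -/
def Bisim {S L : Type*} (τ : S → S → ℝ≥0∞) (ℓ : S → L) (s t : S) : Prop :=
  ∃ r, IsBisimulation τ ℓ r ∧ r s t

/-- The distance operator `Δ`. -/
noncomputable def Delta {S L : Type*} (τ : S → S → ℝ≥0∞) (ℓ : S → L)
    (e : S → S → ℝ≥0∞) (s t : S) : ℝ≥0∞ :=
  if ℓ s ≠ ℓ t then 1
  else ⨅ ω ∈ {ω | IsCoupling (τ s) (τ t) ω}, ∑' p : S × S, ω p * e p.1 p.2

/-- A policy: a coupling for every same-labelled, non-bisimilar pair. -/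
def IsPolicy {S L : Type*} (τ : S → S → ℝ≥0∞) (ℓ : S → L)
    (T : S → S → S × S → ℝ≥0∞) : Prop :=
  ∀ s t, ℓ s = ℓ t → ¬ Bisim τ ℓ s t → IsCoupling (τ s) (τ t) (T s t)

/-- The operator `Θ^T` induced by a policy `T`. -/
noncomputable def Theta {S L : Type*} (τ : S → S → ℝ≥0∞) (ℓ : S → L)
    (T : S → S → S × S → ℝ≥0∞) (e : S → S → ℝ≥0∞) (s t : S) : ℝ≥0∞ :=
  if Bisim τ ℓ s t then 0
  else if ℓ s ≠ ℓ t then 1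
  else ∑' p : S × S, T s t p * e p.1 p.2

/-- `x` is the least (pre-)fixed point of `f`. -/
def IsLfp {α : Type*} [Preorder α] (f : α → α) (x : α) : Prop :=
  f x ≤ x ∧ ∀ y, f y ≤ y → x ≤ y

/-- For every policy `T`, the least fixed point of `Θ^T` dominates the
probabilistic bisimilarity distance `d` (the least fixed point of `Δ`). -/
lemma theta_zero {S L : Type*} (τ : S → S → ℝ≥0∞) (ℓ : S → L)
    (T : S → S → S × S → ℝ≥0∞)
    (θ : S → S → ℝ≥0∞) (hθ : IsLfp (Theta τ ℓ T) θ)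
    {s t : S} (h : Bisim τ ℓ s t) : θ s t = 0 := by
  set θ' : S → S → ℝ≥0∞ := fun a b => if Bisim τ ℓ a b then 0 else θ a b with hθ'def
  have hle : θ ≤ θ' := by
    apply hθ.2
    intro a
    intro b
    by_cases hb : Bisim τ ℓ a b
    · simp [Theta, hb, θ']
    · have h1 : θ' a b = θ a b := by simp [θ', hb]
      rw [h1]
      have h2 := hθ.1 a b
      simp only [Theta, if_neg hb] at h2 ⊢
      by_cases hl : ℓ a ≠ ℓ b
      · rw [if_pos hl] at h2 ⊢; exact h2
      · rw [if_neg hl] at h2 ⊢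
        refine le_trans (ENNReal.tsum_le_tsum fun p => ?_) h2
        refine mul_le_mul_right ?_ _
        simp only [θ']
        split_ifs <;> simp
  have := hle s t
  simp only [θ', if_pos h] at this
  exact le_antisymm this zero_le

theorem stmt9 {S L : Type*} [Countable S] [Finite L]
    (τ : S → S → ℝ≥0∞) (ℓ : S → L)
    (hdistr : ∀ s, (∑' t, τ s t) = 1)
    (hfin : ∀ s, {t | τ s t ≠ 0}.Finite)
    (d : S → S → ℝ≥0∞) (hd : IsLfp (Delta τ ℓ) d)
    (T : S → S → S × S → ℝ≥0∞) (hT : IsPolicy τ ℓ T)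
    (θ : S → S → ℝ≥0∞) (hθ : IsLfp (Theta τ ℓ T) θ) :
    d ≤ θ := by
  refine hd.2 θ ?_
  intro s
  intro t
  by_cases hl : ℓ s ≠ ℓ t
  · -- labels differ
    have hb : ¬ Bisim τ ℓ s t := by
      rintro ⟨r, hr, hrst⟩
      exact hl (hr.2 s t hrst).1
    have h2 := hθ.1 s t
    simp only [Theta, if_neg hb, if_pos hl] at h2
    simpa [Delta, hl] using h2
  · push_neg at hl
    rw [Delta, if_neg (by simp [hl])]
    by_cases hb : Bisim τ ℓ s t
    · -- bisimilar: construct a coupling supported on bisimilar pairs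
      obtain ⟨r, hr, hrst⟩ := hb
      have href : ∀ u, r u u := fun u => hr.1.refl u
      set m : S → ℝ≥0∞ := fun u => ∑' v : {v // r u v}, τ s v with hmdef
      have hmt : ∀ u, m u = ∑' v : {v // r u v}, τ t v := (hr.2 s t hrst).2
      have hsub : ∀ (u : S) (f : S → ℝ≥0∞),
          (∑' v : {v // r u v}, f v) = ∑' v, if r u v then f v else 0 := by
        intro u f
        rw [show (∑' v : {v // r u v}, f v) = ∑' v : {v | r u v}, f v from rfl,
          tsum_subtype]
        exact tsum_congr fun v => by simp [Set.indicator_apply]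
      have hmfin : ∀ u, m u ≠ ⊤ := by
        intro u
        have h1 : m u ≤ ∑' v, τ s v :=
          ENNReal.tsum_comp_le_tsum_of_injective Subtype.val_injective _
        rw [hdistr s] at h1
        exact ne_top_of_le_ne_top ENNReal.one_ne_top h1
      have hτm : ∀ u, τ s u ≤ m u := fun u => ENNReal.le_tsum (⟨u, href u⟩ : {v // r u v})
      have hτmt : ∀ u v, r u v → τ t v ≤ m u := by
        intro u v huv
        rw [hmt u]
        exact ENNReal.le_tsum (⟨v, huv⟩ : {w // r u w})
      have hmconst : ∀ {u v}, r u v → m u = m v := by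
        intro u v huv
        have hset : ∀ w, r u w ↔ r v w :=
          fun w => ⟨fun h => hr.1.trans (hr.1.symm huv) h, fun h => hr.1.trans huv h⟩
        rw [hmdef]
        simp only
        rw [hsub u (τ s), hsub v (τ s)]
        exact tsum_congr fun w => by simp [hset w]
      set ω : S × S → ℝ≥0∞ :=
        fun p => if r p.1 p.2 then τ s p.1 * τ t p.2 / m p.1 else 0 with hωdef
      have hrow : ∀ u, (∑' v, ω (u, v)) = τ s u := by
        intro u
        by_cases h0 : m u = 0
        · have hsu : τ s u = 0 := le_antisymm (h0 ▸ hτm u) zero_le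
          have hz : ∀ v, ω (u, v) = 0 := by
            intro v
            simp only [ω]
            split_ifs with h
            · have : τ t v = 0 := le_antisymm (h0 ▸ hτmt u v h) zero_le
              simp [this]
            · rfl
          simp [hz, hsu]
        · have hterm : ∀ v, ω (u, v) = (τ s u / m u) * (if r u v then τ t v else 0) := by
            intro v
            simp only [ω]
            split_ifs with h
            · rw [div_eq_mul_inv, div_eq_mul_inv, mul_right_comm]
            · simp
          rw [tsum_congr hterm, ENNReal.tsum_mul_left, ← hsub u (τ t), ← hmt u,
            ENNReal.div_mul_cancel h0 (hmfin u)]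
      have hcol : ∀ v, (∑' u, ω (u, v)) = τ t v := by
        intro v
        by_cases h0 : m v = 0
        · have htv : τ t v = 0 := le_antisymm (h0 ▸ hτmt v v (href v)) zero_le
          have hz : ∀ u, ω (u, v) = 0 := by
            intro u
            simp only [ω]
            split_ifs with h
            · simp [htv]
            · rfl
          simp [hz, htv]
        · have hterm : ∀ u, ω (u, v) = (τ t v / m v) * (if r v u then τ s u else 0) := by
            intro u
            simp only [ω]
            by_cases h : r u v
            · rw [if_pos h, if_pos (hr.1.symm h), hmconst h,
                div_eq_mul_inv, div_eq_mul_inv]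
              ring
            · rw [if_neg h, if_neg (fun hvu => h (hr.1.symm hvu)), mul_zero]
          rw [tsum_congr hterm, ENNReal.tsum_mul_left, ← hsub v (τ s)]
          exact ENNReal.div_mul_cancel h0 (hmfin v)
      have hω : IsCoupling (τ s) (τ t) ω := ⟨hrow, hcol⟩
      have hzero : (∑' p : S × S, ω p * θ p.1 p.2) = 0 := by
        rw [ENNReal.tsum_eq_zero]
        intro p
        simp only [ω]
        split_ifs with h
        · rw [theta_zero τ ℓ T θ hθ ⟨r, hr, h⟩, mul_zero]
        · rw [zero_mul]
      calc (⨅ ω ∈ {ω | IsCoupling (τ s) (τ t) ω}, ∑' p : S × S, ω p * θ p.1 p.2)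
          ≤ ∑' p : S × S, ω p * θ p.1 p.2 := iInf₂_le ω hω
        _ = 0 := hzero
        _ ≤ θ s t := zero_le
    · -- not bisimilar: use the policy coupling
      have h2 := hθ.1 s t
      simp only [Theta, if_neg hb, if_neg (by simp [hl] : ¬ ℓ s ≠ ℓ t)] at h2
      exact le_trans (iInf₂_le (T s t) (hT s t hl hb)) h2
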